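/- arXiv:math-ph/0206019 — 3 statements merged into one kernel-verified Lean document; each statement's English description precedes it below -/
import Mathlib

section
/- Let d₁, d₂ ≥ 1 be integers, d = d₁ + d₂, and let v : ℤ^{d₂} → ℝ be a bounded function. Let H = H₀ + V be the bounded self-adjoint operator on ℓ²(ℤ^d; ℂ), where H₀ is the discrete Laplacian and V is the multiplication operator by V(x) = δ(x₁) v(x₂) for x = (x₁,x₂) ∈ ℤ^{d₁}×ℤ^{d₂}. Then the interval [−d, d] (viewed as a subset of ℂ via the real embedding) is contained in the spectrum of H. -/
open Complex

/-- The discrete Laplacian part: `(H₀Ψ)(x) = -(1/2) ∑_{|x-y|=1} Ψ(y)` on `ℤ^{d₁} × ℤ^{d₂}`. -/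
noncomputable def lapSum (d₁ d₂ : ℕ) (Ψ : (Fin d₁ → ℤ) × (Fin d₂ → ℤ) → ℂ)
    (x : (Fin d₁ → ℤ) × (Fin d₂ → ℤ)) : ℂ :=
  -(1/2) * ((∑ i : Fin d₁, (Ψ (Function.update x.1 i (x.1 i + 1), x.2)
      + Ψ (Function.update x.1 i (x.1 i - 1), x.2)))
    + ∑ j : Fin d₂, (Ψ (x.1, Function.update x.2 j (x.2 j + 1))
      + Ψ (x.1, Function.update x.2 j (x.2 j - 1))))

/-- elementary plane wave -/
noncomputable def ewave (θ : ℝ) (s : ℤ) : ℂ := Complex.exp ((θ * (s : ℝ) : ℝ) * Complex.I)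

lemma ewave_norm (θ : ℝ) (s : ℤ) : ‖ewave θ s‖ = 1 := by
  rw [ewave, Complex.norm_exp_ofReal_mul_I]

lemma ewave_pair (θ : ℝ) (s : ℤ) :
    ewave θ (s + 1) + ewave θ (s - 1) = 2 * (Real.cos θ : ℂ) * ewave θ s := by
  have e1 : ((θ * ((s + 1 : ℤ) : ℝ) : ℝ) : ℂ) * Complex.I
      = ((θ * (s : ℝ) : ℝ) : ℂ) * Complex.I + (θ : ℂ) * Complex.I := by push_cast; ring
  have e2 : ((θ * ((s - 1 : ℤ) : ℝ) : ℝ) : ℂ) * Complex.I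
      = ((θ * (s : ℝ) : ℝ) : ℂ) * Complex.I + (-(θ : ℂ)) * Complex.I := by push_cast; ring
  have hc : Complex.exp ((θ : ℂ) * Complex.I) + Complex.exp (-(θ : ℂ) * Complex.I)
      = 2 * (Real.cos θ : ℂ) := by
    rw [Complex.exp_mul_I, Complex.exp_mul_I, Complex.cos_neg, Complex.sin_neg,
      ← Complex.ofReal_cos]
    ring
  rw [ewave, ewave, ewave, e1, e2, Complex.exp_add, Complex.exp_add]
  calc Complex.exp (((θ * (s : ℝ) : ℝ) : ℂ) * Complex.I) * Complex.exp ((θ : ℂ) * Complex.I)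
        + Complex.exp (((θ * (s : ℝ) : ℝ) : ℂ) * Complex.I) * Complex.exp (-(θ : ℂ) * Complex.I)
      = Complex.exp (((θ * (s : ℝ) : ℝ) : ℂ) * Complex.I)
          * (Complex.exp ((θ : ℂ) * Complex.I) + Complex.exp (-(θ : ℂ) * Complex.I)) := by ring
    _ = _ := by rw [hc]; ring

/-- a^(n+1) - b^(n+1) ≤ (n+1)(a-b)a^n for 0 ≤ b ≤ a -/
lemma auxPow (a b : ℝ) (hb : 0 ≤ b) (hba : b ≤ a) :
    ∀ n : ℕ, a ^ (n + 1) - b ^ (n + 1) ≤ ((n : ℝ) + 1) * (a - b) * a ^ n := by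
  intro n
  induction n with
  | zero => norm_num
  | succ n ih =>
    have ha : 0 ≤ a := hb.trans hba
    have h1 : b ^ (n + 1) ≤ a ^ (n + 1) := pow_le_pow_left₀ hb hba _
    have h2 : a * (a ^ (n + 1) - b ^ (n + 1)) ≤ a * (((n : ℝ) + 1) * (a - b) * a ^ n) :=
      mul_le_mul_of_nonneg_left ih ha
    have h3 : a ^ (n + 2) - b ^ (n + 2)
        = a * (a ^ (n + 1) - b ^ (n + 1)) + (a - b) * b ^ (n + 1) := by ring
    have h4 : (a - b) * b ^ (n + 1) ≤ (a - b) * a ^ (n + 1) :=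
      mul_le_mul_of_nonneg_left h1 (by linarith)
    have h5 : a * (((n : ℝ) + 1) * (a - b) * a ^ n) = ((n : ℝ) + 1) * (a - b) * a ^ (n + 1) := by
      ring
    push_cast
    nlinarith [h2, h3, h4, h5]

lemma update_close {d : ℕ} (y : Fin d → ℤ) (i : Fin d) (c : ℤ) (hc : |c - y i| ≤ 1) :
    ∀ m, |Function.update y i c m - y m| ≤ 1 := by
  intro m
  by_cases hmi : m = i
  · subst hmi; rw [Function.update_self]; exact hc
  · rw [Function.update_of_ne hmi]; simp

lemma abs_plus_one {a : ℤ} : |a + 1 - a| ≤ 1 := by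
  have h : a + 1 - a = 1 := by ring
  rw [h]
  norm_num

lemma abs_minus_one {a : ℤ} : |a - 1 - a| ≤ 1 := by
  have h : a - 1 - a = -1 := by ring
  rw [h]
  norm_num

set_option maxHeartbeats 1000000 in
/-- For any bounded surface potential `v`, the spectrum of the bounded
self-adjoint operator `H = H₀ + V` on `ℓ²(ℤ^d; ℂ)`, where `V(x) = δ(x₁) v(x₂)`,
contains the interval `[-d, d]`. -/
theorem surface_operator_spectrum_contains_laplacian_spectrum
    (d₁ d₂ : ℕ) (hd₁ : 1 ≤ d₁) (hd₂ : 1 ≤ d₂)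
    (v : (Fin d₂ → ℤ) → ℝ) (hv : ∃ C : ℝ, ∀ x₂, |v x₂| ≤ C)
    (H : lp (fun _ : (Fin d₁ → ℤ) × (Fin d₂ → ℤ) => ℂ) 2 →L[ℂ]
        lp (fun _ : (Fin d₁ → ℤ) × (Fin d₂ → ℤ) => ℂ) 2)
    (hH : IsSelfAdjoint H)
    (hact : ∀ (Ψ : lp (fun _ : (Fin d₁ → ℤ) × (Fin d₂ → ℤ) => ℂ) 2)
        (x : (Fin d₁ → ℤ) × (Fin d₂ → ℤ)),
      (H Ψ : ∀ _ : (Fin d₁ → ℤ) × (Fin d₂ → ℤ), ℂ) x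
        = lapSum d₁ d₂ (↑Ψ) x + (if x.1 = 0 then (v x.2 : ℂ) else 0) * Ψ x)
    (E : ℝ) (hE : E ∈ Set.Icc (-(d₁ + d₂ : ℝ)) (d₁ + d₂ : ℝ)) :
    (E : ℂ) ∈ spectrum ℂ H := by
  classical
  by_contra hspec
  rw [spectrum.notMem_iff] at hspec
  obtain ⟨u, hu⟩ := hspec
  set A : lp (fun _ : (Fin d₁ → ℤ) × (Fin d₂ → ℤ) => ℂ) 2 →L[ℂ]
      lp (fun _ : (Fin d₁ → ℤ) × (Fin d₂ → ℤ) => ℂ) 2 :=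
    algebraMap ℂ _ (E : ℂ) - H with hA
  set C : ℝ := ‖((u⁻¹ : _ˣ) : lp (fun _ : (Fin d₁ → ℤ) × (Fin d₂ → ℤ) => ℂ) 2 →L[ℂ]
      lp (fun _ : (Fin d₁ → ℤ) × (Fin d₂ → ℤ) => ℂ) 2)‖ with hCdef
  have hlow : ∀ ψ, ‖ψ‖ ≤ C * ‖A ψ‖ := by
    intro ψ
    have h1 := u.inv_mul
    rw [hu] at h1
    have h2 := congrArg (fun B => B ψ) h1
    simp only [ContinuousLinearMap.mul_apply, ContinuousLinearMap.one_apply] at h2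
    have h3 := ContinuousLinearMap.le_opNorm
      ((u⁻¹ : _ˣ) : lp (fun _ : (Fin d₁ → ℤ) × (Fin d₂ → ℤ) => ℂ) 2 →L[ℂ]
        lp (fun _ : (Fin d₁ → ℤ) × (Fin d₂ → ℤ) => ℂ) 2) (A ψ)
    rw [h2] at h3
    exact h3
  have hC0 : 0 ≤ C := norm_nonneg _
  -- dimension
  have hdpos : (0 : ℝ) < (d₁ : ℝ) + d₂ := by positivity
  have hEd : |E| ≤ (d₁ : ℝ) + d₂ := abs_le.mpr ⟨by linarith [hE.1], hE.2⟩
  set θ : ℝ := Real.arccos (-(E / ((d₁ : ℝ) + d₂))) with hθdef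
  have hcos : Real.cos θ = -(E / ((d₁ : ℝ) + d₂)) := by
    apply Real.cos_arccos
    · exact neg_le_neg ((div_le_one hdpos).mpr (by linarith [abs_le.mp hEd]))
    · rw [neg_le, le_div_iff₀ hdpos]
      linarith [abs_le.mp hEd]
  -- plane wave
  set pw : (Fin d₁ → ℤ) × (Fin d₂ → ℤ) → ℂ :=
    fun x => ewave θ ((∑ i, x.1 i) + ∑ j, x.2 j) with hpwdef
  have hpw_norm : ∀ x, ‖pw x‖ = 1 := fun x => ewave_norm θ _
  -- sum over updated coordinate
  have hupd : ∀ (y : Fin d₁ → ℤ) (i : Fin d₁) (c : ℤ),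
      (∑ k, Function.update y i (y i + c) k) = (∑ k, y k) + c := by
    intro y i c
    rw [Finset.sum_update_of_mem (Finset.mem_univ i)]
    have h2 : ∑ k, y k = y i + ∑ k ∈ Finset.univ \ {i}, y k := by
      conv_lhs => rw [← Function.update_eq_self i y]
      exact Finset.sum_update_of_mem (Finset.mem_univ i) y (y i)
    omega
  have hupd2 : ∀ (y : Fin d₂ → ℤ) (j : Fin d₂) (c : ℤ),
      (∑ k, Function.update y j (y j + c) k) = (∑ k, y k) + c := by
    intro y j c
    rw [Finset.sum_update_of_mem (Finset.mem_univ j)]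
    have h2 : ∑ k, y k = y j + ∑ k ∈ Finset.univ \ {j}, y k := by
      conv_lhs => rw [← Function.update_eq_self j y]
      exact Finset.sum_update_of_mem (Finset.mem_univ j) y (y j)
    omega
  -- lapSum of plane wave
  have hpair1 : ∀ (x : (Fin d₁ → ℤ) × (Fin d₂ → ℤ)) (i : Fin d₁),
      pw (Function.update x.1 i (x.1 i + 1), x.2) + pw (Function.update x.1 i (x.1 i - 1), x.2)
        = 2 * (Real.cos θ : ℂ) * pw x := by
    intro x i
    have e1 : (∑ k, Function.update x.1 i (x.1 i + 1) k) + ∑ j, x.2 j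
        = ((∑ k, x.1 k) + ∑ j, x.2 j) + 1 := by rw [hupd]; ring
    have e2 : (∑ k, Function.update x.1 i (x.1 i - 1) k) + ∑ j, x.2 j
        = ((∑ k, x.1 k) + ∑ j, x.2 j) - 1 := by
      rw [show x.1 i - 1 = x.1 i + (-1) by ring, hupd]; ring
    simp only [hpwdef]
    rw [e1, e2]
    exact ewave_pair θ _
  have hpair2 : ∀ (x : (Fin d₁ → ℤ) × (Fin d₂ → ℤ)) (j : Fin d₂),
      pw (x.1, Function.update x.2 j (x.2 j + 1)) + pw (x.1, Function.update x.2 j (x.2 j - 1))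
        = 2 * (Real.cos θ : ℂ) * pw x := by
    intro x j
    have e1 : (∑ i, x.1 i) + ∑ k, Function.update x.2 j (x.2 j + 1) k
        = ((∑ i, x.1 i) + ∑ k, x.2 k) + 1 := by rw [hupd2]; ring
    have e2 : (∑ i, x.1 i) + ∑ k, Function.update x.2 j (x.2 j - 1) k
        = ((∑ i, x.1 i) + ∑ k, x.2 k) - 1 := by
      rw [show x.2 j - 1 = x.2 j + (-1) by ring, hupd2]; ring
    simp only [hpwdef]
    rw [e1, e2]
    exact ewave_pair θ _
  have hlap_pw : ∀ x, lapSum d₁ d₂ pw x = (E : ℂ) * pw x := by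
    intro x
    unfold lapSum
    rw [Finset.sum_congr rfl (fun i _ => hpair1 x i),
      Finset.sum_congr rfl (fun j _ => hpair2 x j)]
    simp only [Finset.sum_const, Finset.card_univ, Fintype.card_fin, nsmul_eq_mul]
    have hcosC : (Real.cos θ : ℂ) = -((E : ℂ) / ((d₁ : ℂ) + d₂)) := by
      rw [hcos]; push_cast; ring
    rw [hcosC]
    have hne : ((d₁ : ℂ) + d₂) ≠ 0 := by
      have h0 : ((d₁ + d₂ : ℕ) : ℂ) ≠ 0 := Nat.cast_ne_zero.mpr (by omega)
      simpa using h0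
    field_simp
    ring
  -- boxes
  set Box : ℤ → ℤ → Finset ((Fin d₁ → ℤ) × (Fin d₂ → ℤ)) := fun a b =>
    (Fintype.piFinset fun _ : Fin d₁ => Finset.Icc a b) ×ˢ
      (Fintype.piFinset fun _ : Fin d₂ => Finset.Icc a b) with hBoxdef
  have hBoxmem : ∀ (a b : ℤ) x, x ∈ Box a b ↔
      (∀ i, a ≤ x.1 i ∧ x.1 i ≤ b) ∧ (∀ j, a ≤ x.2 j ∧ x.2 j ≤ b) := by
    intro a b x
    simp [hBoxdef, Finset.mem_product, Fintype.mem_piFinset, Finset.mem_Icc]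
  have hBoxmem2 : ∀ (a b : ℤ) (y₁ : Fin d₁ → ℤ) (y₂ : Fin d₂ → ℤ), ((y₁, y₂) ∈ Box a b) ↔
      ((∀ i, a ≤ y₁ i ∧ y₁ i ≤ b) ∧ (∀ j, a ≤ y₂ j ∧ y₂ j ≤ b)) :=
    fun a b y₁ y₂ => hBoxmem a b (y₁, y₂)
  have hBoxcard : ∀ a b : ℤ, (Box a b).card = (b + 1 - a).toNat ^ (d₁ + d₂) := by
    intro a b
    simp [hBoxdef, Finset.card_product, Fintype.card_piFinset, Int.card_Icc, pow_add]
  -- key estimate for each L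
  have key : ∀ L : ℕ, 2 ≤ L →
      ((L : ℝ)) ^ (d₁ + d₂) ≤ C ^ 2 * (2 * ((d₁ : ℝ) + d₂)) ^ 2 *
        (((L : ℝ) + 2) ^ (d₁ + d₂) - ((L : ℝ) - 2) ^ (d₁ + d₂)) := by
    intro L hL
    set B : Finset ((Fin d₁ → ℤ) × (Fin d₂ → ℤ)) := Box 1 L with hBdef
    set f : (Fin d₁ → ℤ) × (Fin d₂ → ℤ) → ℂ := fun x => if x ∈ B then pw x else 0 with hfdef
    have hfB : ∀ y, y ∉ B → f y = 0 := fun y hy => if_neg hy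
    have hf_le : ∀ y, ‖f y‖ ≤ 1 := by
      intro y
      by_cases hy : y ∈ B
      · simp [hfdef, hy, hpw_norm]
      · simp [hfdef, hy]
    have hmem : Memℓp f 2 := by
      apply memℓp_gen
      apply summable_of_ne_finset_zero (s := B)
      intro x hx; simp [hfB x hx]
    set ψ : lp (fun _ : (Fin d₁ → ℤ) × (Fin d₂ → ℤ) => ℂ) 2 := ⟨f, hmem⟩ with hψdef
    have hψcoe : (↑ψ : ∀ _ : (Fin d₁ → ℤ) × (Fin d₂ → ℤ), ℂ) = f := rfl
    -- pointwise formula for A ψ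
    have hAψ : ∀ x, (↑(A ψ) : ∀ _ : (Fin d₁ → ℤ) × (Fin d₂ → ℤ), ℂ) x
        = (E : ℂ) * f x - lapSum d₁ d₂ f x := by
      intro x
      have h1 : A ψ = (E : ℂ) • ψ - H ψ := by
        rw [hA]; simp only [Algebra.algebraMap_eq_smul_one, ContinuousLinearMap.sub_apply,
          ContinuousLinearMap.smul_apply, ContinuousLinearMap.one_apply]
      have h2 : (↑(A ψ) : ∀ _ : (Fin d₁ → ℤ) × (Fin d₂ → ℤ), ℂ) x
          = (E : ℂ) * f x - (H ψ : ∀ _, ℂ) x := by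
        rw [h1]; simp only [lp.coeFn_sub, lp.coeFn_smul, Pi.sub_apply, Pi.smul_apply, hψcoe,
          smul_eq_mul]
      rw [h2, hact ψ x]
      have hδ : (if x.1 = 0 then (v x.2 : ℂ) else 0) * (ψ : ∀ _, ℂ) x = 0 := by
        by_cases hx0 : x.1 = 0
        · have : x ∉ B := by
            rw [hBdef, hBoxmem]
            intro hc
            have := (hc.1 ⟨0, hd₁⟩).1
            rw [hx0] at this
            simp at this
          simp [hψcoe, hfB x this, hx0]
        · simp [hx0]
      rw [hδ, add_zero]
      try rfl
      try rw [hψcoe]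
    -- support of A ψ
    set T : Finset ((Fin d₁ → ℤ) × (Fin d₂ → ℤ)) := Box 0 (L + 1) with hTdef
    set Int : Finset ((Fin d₁ → ℤ) × (Fin d₂ → ℤ)) := Box 2 ((L : ℤ) - 1) with hIntdef
    have hIntT : Int ⊆ T := by
      intro x hx
      rw [hIntdef, hBoxmem] at hx
      rw [hTdef, hBoxmem]
      constructor
      · intro i; have := hx.1 i; omega
      · intro j; have := hx.2 j; omega
    have hsupp : ∀ x ∉ T, (↑(A ψ) : ∀ _ : (Fin d₁ → ℤ) × (Fin d₂ → ℤ), ℂ) x = 0 := by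
      intro x hx
      rw [hAψ]
      rw [hTdef] at hx
      have hx' : (∃ i, x.1 i < 0 ∨ (L : ℤ) + 1 < x.1 i)
          ∨ (∃ j, x.2 j < 0 ∨ (L : ℤ) + 1 < x.2 j) := by
        by_contra h
        push_neg at h
        exact hx ((hBoxmem _ _ x).2 ⟨fun i => by have := h.1 i; omega,
          fun j => by have := h.2 j; omega⟩)
      rcases hx' with ⟨k, hk⟩ | ⟨k, hk⟩
      · -- bad coordinate in first component
        have hfx : f x = 0 := by
          apply hfB; rw [hBdef, hBoxmem]; intro hc; have := hc.1 k; omega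
        have hnb1 : ∀ (g : Fin d₁ → ℤ), (∀ m, |g m - x.1 m| ≤ 1) → f (g, x.2) = 0 := by
          intro g hg
          apply hfB; rw [hBdef, hBoxmem2]; intro hc
          have h1 := (hc.1 k)
          have h2 := hg k
          rw [abs_le] at h2
          omega
        have hnb2 : ∀ g : Fin d₂ → ℤ, f (x.1, g) = 0 := by
          intro g
          apply hfB; rw [hBdef, hBoxmem2]; intro hc; have := hc.1 k; omega
        unfold lapSum
        have z1 : ∀ i : Fin d₁, f (Function.update x.1 i (x.1 i + 1), x.2)
            + f (Function.update x.1 i (x.1 i - 1), x.2) = 0 := by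
          intro i
          rw [hnb1 _ (update_close x.1 i _ abs_plus_one),
            hnb1 _ (update_close x.1 i _ abs_minus_one)]
          ring
        have z2 : ∀ j : Fin d₂, f (x.1, Function.update x.2 j (x.2 j + 1))
            + f (x.1, Function.update x.2 j (x.2 j - 1)) = 0 := by
          intro j; rw [hnb2, hnb2]; ring
        rw [Finset.sum_congr rfl (fun i _ => z1 i), Finset.sum_congr rfl (fun j _ => z2 j)]
        simp [hfx]
      · -- bad coordinate in second component
        have hfx : f x = 0 := by
          apply hfB; rw [hBdef, hBoxmem]; intro hc; have := hc.2 k; omega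
        have hnb1 : ∀ (g : Fin d₂ → ℤ), (∀ m, |g m - x.2 m| ≤ 1) → f (x.1, g) = 0 := by
          intro g hg
          apply hfB; rw [hBdef, hBoxmem2]; intro hc
          have h1 := (hc.2 k)
          have h2 := hg k
          rw [abs_le] at h2
          omega
        have hnb2 : ∀ g : Fin d₁ → ℤ, f (g, x.2) = 0 := by
          intro g
          apply hfB; rw [hBdef, hBoxmem2]; intro hc; have := hc.2 k; omega
        unfold lapSum
        have z1 : ∀ i : Fin d₁, f (Function.update x.1 i (x.1 i + 1), x.2)
            + f (Function.update x.1 i (x.1 i - 1), x.2) = 0 := by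
          intro i; rw [hnb2, hnb2]; ring
        have z2 : ∀ j : Fin d₂, f (x.1, Function.update x.2 j (x.2 j + 1))
            + f (x.1, Function.update x.2 j (x.2 j - 1)) = 0 := by
          intro j
          rw [hnb1 _ (update_close x.2 j _ abs_plus_one),
            hnb1 _ (update_close x.2 j _ abs_minus_one)]
          ring
        rw [Finset.sum_congr rfl (fun i _ => z1 i), Finset.sum_congr rfl (fun j _ => z2 j)]
        simp [hfx]
    -- interior vanishing
    have hint0 : ∀ x ∈ Int, (↑(A ψ) : ∀ _ : (Fin d₁ → ℤ) × (Fin d₂ → ℤ), ℂ) x = 0 := by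
      intro x hx
      rw [hIntdef, hBoxmem] at hx
      have hxB : x ∈ B := by
        rw [hBdef, hBoxmem]
        exact ⟨fun i => by have := hx.1 i; omega, fun j => by have := hx.2 j; omega⟩
      have hfx : f x = pw x := if_pos hxB
      have hnb1 : ∀ (i : Fin d₁) (c : ℤ), c = x.1 i + 1 ∨ c = x.1 i - 1 →
          f (Function.update x.1 i c, x.2) = pw (Function.update x.1 i c, x.2) := by
        intro i c hc
        apply if_pos
        rw [hBdef, hBoxmem2]
        constructor
        · intro m
          by_cases hmi : m = i
          · subst hmi
            rw [Function.update_self]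
            have := hx.1 m; omega
          · rw [Function.update_of_ne hmi]
            have := hx.1 m; omega
        · intro j; have := hx.2 j; omega
      have hnb2 : ∀ (j : Fin d₂) (c : ℤ), c = x.2 j + 1 ∨ c = x.2 j - 1 →
          f (x.1, Function.update x.2 j c) = pw (x.1, Function.update x.2 j c) := by
        intro j c hc
        apply if_pos
        rw [hBdef, hBoxmem2]
        constructor
        · intro i; have := hx.1 i; omega
        · intro m
          by_cases hmj : m = j
          · subst hmj
            rw [Function.update_self]
            have := hx.2 m; omega
          · rw [Function.update_of_ne hmj]
            have := hx.2 m; omega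
      have hlapf : lapSum d₁ d₂ f x = lapSum d₁ d₂ pw x := by
        unfold lapSum
        congr 1
        congr 1
        · exact Finset.sum_congr rfl fun i _ => by
            rw [hnb1 i _ (Or.inl rfl), hnb1 i _ (Or.inr rfl)]
        · exact Finset.sum_congr rfl fun j _ => by
            rw [hnb2 j _ (Or.inl rfl), hnb2 j _ (Or.inr rfl)]
      rw [hAψ, hlapf, hlap_pw, hfx]
      ring
    -- pointwise bound
    have hbound : ∀ x, ‖(↑(A ψ) : ∀ _ : (Fin d₁ → ℤ) × (Fin d₂ → ℤ), ℂ) x‖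
        ≤ 2 * ((d₁ : ℝ) + d₂) := by
      intro x
      rw [hAψ]
      have h1 : ‖(E : ℂ) * f x‖ ≤ (d₁ : ℝ) + d₂ := by
        rw [norm_mul]
        calc ‖(E : ℂ)‖ * ‖f x‖ ≤ ((d₁ : ℝ) + d₂) * 1 := by
              apply mul_le_mul _ (hf_le x) (norm_nonneg _) (by linarith)
              rw [Complex.norm_real, Real.norm_eq_abs]; exact hEd
          _ = (d₁ : ℝ) + d₂ := mul_one _
      have h2 : ‖lapSum d₁ d₂ f x‖ ≤ (d₁ : ℝ) + d₂ := by
        unfold lapSum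
        rw [norm_mul]
        have hS1 : ‖∑ i : Fin d₁, (f (Function.update x.1 i (x.1 i + 1), x.2)
            + f (Function.update x.1 i (x.1 i - 1), x.2))‖ ≤ 2 * d₁ := by
          calc _ ≤ ∑ i : Fin d₁, ‖f (Function.update x.1 i (x.1 i + 1), x.2)
                + f (Function.update x.1 i (x.1 i - 1), x.2)‖ := norm_sum_le _ _
            _ ≤ ∑ _i : Fin d₁, (2 : ℝ) := by
                apply Finset.sum_le_sum
                intro i _
                have ha := hf_le (Function.update x.1 i (x.1 i + 1), x.2)
                have hb := hf_le (Function.update x.1 i (x.1 i - 1), x.2)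
                exact (norm_add_le _ _).trans (by linarith)
            _ = 2 * d₁ := by simp [mul_comm]
        have hS2 : ‖∑ j : Fin d₂, (f (x.1, Function.update x.2 j (x.2 j + 1))
            + f (x.1, Function.update x.2 j (x.2 j - 1)))‖ ≤ 2 * d₂ := by
          calc _ ≤ ∑ j : Fin d₂, ‖f (x.1, Function.update x.2 j (x.2 j + 1))
                + f (x.1, Function.update x.2 j (x.2 j - 1))‖ := norm_sum_le _ _
            _ ≤ ∑ _j : Fin d₂, (2 : ℝ) := by
                apply Finset.sum_le_sum
                intro j _
                have ha := hf_le (x.1, Function.update x.2 j (x.2 j + 1))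
                have hb := hf_le (x.1, Function.update x.2 j (x.2 j - 1))
                exact (norm_add_le _ _).trans (by linarith)
            _ = 2 * d₂ := by simp [mul_comm]
        have hhalf : ‖(-(1/2) : ℂ)‖ = 1/2 := by norm_num
        calc ‖(-(1/2) : ℂ)‖ * ‖_ + _‖ ≤ (1/2 : ℝ) * (2 * d₁ + 2 * d₂) := by
              rw [hhalf]
              have := (norm_add_le _ _).trans (add_le_add hS1 hS2)
              linarith
          _ = (d₁ : ℝ) + d₂ := by ring
      calc ‖(E : ℂ) * f x - lapSum d₁ d₂ f x‖ ≤ ‖(E : ℂ) * f x‖ + ‖lapSum d₁ d₂ f x‖ :=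
            norm_sub_le _ _
        _ ≤ 2 * ((d₁ : ℝ) + d₂) := by linarith
    -- norm squared formula
    have rp : ∀ φ : lp (fun _ : (Fin d₁ → ℤ) × (Fin d₂ → ℤ) => ℂ) 2,
        ‖φ‖ ^ 2 = ∑' x, ‖(↑φ : ∀ _, ℂ) x‖ ^ 2 := by
      intro φ
      have h := lp.norm_rpow_eq_tsum (p := 2) (by norm_num) φ
      norm_num at h
      exact_mod_cast h
    -- norm of ψ
    have hnψ : ‖ψ‖ ^ 2 = (L : ℝ) ^ (d₁ + d₂) := by
      rw [rp ψ]
      rw [tsum_eq_sum (s := B) (fun x hx => by simp [hψcoe, hfB x hx])]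
      have : ∀ x ∈ B, ‖(↑ψ : ∀ _, ℂ) x‖ ^ 2 = 1 := by
        intro x hx
        rw [hψcoe]
        simp [hfdef, hx, hpw_norm]
      rw [Finset.sum_congr rfl this, Finset.sum_const, hBdef, hBoxcard]
      have : ((L : ℤ) + 1 - 1).toNat = L := by omega
      rw [this]
      simp
    -- norm of A ψ
    have hnAψ : ‖A ψ‖ ^ 2 ≤ (2 * ((d₁ : ℝ) + d₂)) ^ 2
        * (((L + 2) ^ (d₁ + d₂) - (L - 2) ^ (d₁ + d₂) : ℕ) : ℝ) := by
      rw [rp (A ψ)]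
      rw [tsum_eq_sum (s := T) (fun x hx => by simp [hsupp x hx])]
      rw [← Finset.sum_subset (Finset.sdiff_subset : T \ Int ⊆ T)
        (fun x hxT hxn => by
          have hxI : x ∈ Int := by
            by_contra hni
            exact hxn (Finset.mem_sdiff.mpr ⟨hxT, hni⟩)
          simp [hint0 x hxI])]
      calc ∑ x ∈ T \ Int, ‖(↑(A ψ) : ∀ _, ℂ) x‖ ^ 2
          ≤ (T \ Int).card • ((2 * ((d₁ : ℝ) + d₂)) ^ 2) := by
            apply Finset.sum_le_card_nsmul
            intro x _
            exact pow_le_pow_left₀ (norm_nonneg _) (hbound x) 2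
        _ = ((T \ Int).card : ℝ) * (2 * ((d₁ : ℝ) + d₂)) ^ 2 := by
            rw [nsmul_eq_mul]
        _ = (2 * ((d₁ : ℝ) + d₂)) ^ 2
            * (((L + 2) ^ (d₁ + d₂) - (L - 2) ^ (d₁ + d₂) : ℕ) : ℝ) := by
            rw [Finset.card_sdiff_of_subset hIntT, hTdef, hIntdef, hBoxcard, hBoxcard]
            have e1 : ((L : ℤ) + 1 + 1 - 0).toNat = L + 2 := by omega
            have e2 : ((L : ℤ) - 1 + 1 - 2).toNat = L - 2 := by omega
            rw [e1, e2]
            ring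
    -- combine
    have hsq : ‖ψ‖ ^ 2 ≤ C ^ 2 * ‖A ψ‖ ^ 2 := by
      have h := hlow ψ
      have := mul_self_le_mul_self (norm_nonneg ψ) h
      calc ‖ψ‖ ^ 2 = ‖ψ‖ * ‖ψ‖ := by ring
        _ ≤ (C * ‖A ψ‖) * (C * ‖A ψ‖) := this
        _ = C ^ 2 * ‖A ψ‖ ^ 2 := by ring
    have hcast : (((L + 2) ^ (d₁ + d₂) - (L - 2) ^ (d₁ + d₂) : ℕ) : ℝ)
        = ((L : ℝ) + 2) ^ (d₁ + d₂) - ((L : ℝ) - 2) ^ (d₁ + d₂) := by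
      rw [Nat.cast_sub (Nat.pow_le_pow_left (by omega) _)]
      have h2 : ((L - 2 : ℕ) : ℝ) = (L : ℝ) - 2 := by
        have h3 := Nat.cast_sub (R := ℝ) hL
        simpa using h3
      push_cast [h2]
      ring
    calc ((L : ℝ)) ^ (d₁ + d₂) = ‖ψ‖ ^ 2 := hnψ.symm
      _ ≤ C ^ 2 * ‖A ψ‖ ^ 2 := hsq
      _ ≤ C ^ 2 * ((2 * ((d₁ : ℝ) + d₂)) ^ 2
          * (((L + 2) ^ (d₁ + d₂) - (L - 2) ^ (d₁ + d₂) : ℕ) : ℝ)) := by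
            apply mul_le_mul_of_nonneg_left hnAψ (by positivity)
      _ = C ^ 2 * (2 * ((d₁ : ℝ) + d₂)) ^ 2 *
          (((L : ℝ) + 2) ^ (d₁ + d₂) - ((L : ℝ) - 2) ^ (d₁ + d₂)) := by
            rw [hcast]; ring
  -- final contradiction
  set n : ℕ := d₁ + d₂ - 1 with hndef
  have hn : d₁ + d₂ = n + 1 := by omega
  set K : ℝ := C ^ 2 * (2 * ((d₁ : ℝ) + d₂)) ^ 2 * (((n : ℝ) + 1) * 4 * 2 ^ n) with hKdef
  have hfinal : ∀ L : ℕ, 2 ≤ L → (L : ℝ) ≤ K := by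
    intro L hL
    have hLR : (2 : ℝ) ≤ (L : ℝ) := by exact_mod_cast hL
    have h1 := key L hL
    rw [hn] at h1
    have h2 := auxPow ((L : ℝ) + 2) ((L : ℝ) - 2) (by linarith) (by linarith) n
    have h4 : ((L : ℝ) + 2) - ((L : ℝ) - 2) = 4 := by ring
    rw [h4] at h2
    have h5 : ((L : ℝ) + 2) ^ n ≤ 2 ^ n * (L : ℝ) ^ n := by
      calc ((L : ℝ) + 2) ^ n ≤ (2 * (L : ℝ)) ^ n :=
            pow_le_pow_left₀ (by linarith) (by linarith) n
        _ = 2 ^ n * (L : ℝ) ^ n := mul_pow 2 _ n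
    have hLn : (0 : ℝ) < (L : ℝ) ^ n := by positivity
    have h6 : ((L : ℝ) + 2) ^ (n + 1) - ((L : ℝ) - 2) ^ (n + 1)
        ≤ ((n : ℝ) + 1) * 4 * (2 ^ n * (L : ℝ) ^ n) := by
      calc ((L : ℝ) + 2) ^ (n + 1) - ((L : ℝ) - 2) ^ (n + 1)
          ≤ ((n : ℝ) + 1) * 4 * ((L : ℝ) + 2) ^ n := h2
        _ ≤ ((n : ℝ) + 1) * 4 * (2 ^ n * (L : ℝ) ^ n) := by
            apply mul_le_mul_of_nonneg_left h5 (by positivity)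
    have h7 : (L : ℝ) ^ (n + 1) ≤ K * (L : ℝ) ^ n := by
      have hcc : (0 : ℝ) ≤ C ^ 2 * (2 * ((d₁ : ℝ) + d₂)) ^ 2 := by positivity
      calc (L : ℝ) ^ (n + 1)
          ≤ C ^ 2 * (2 * ((d₁ : ℝ) + d₂)) ^ 2 *
            (((L : ℝ) + 2) ^ (n + 1) - ((L : ℝ) - 2) ^ (n + 1)) := h1
        _ ≤ C ^ 2 * (2 * ((d₁ : ℝ) + d₂)) ^ 2 * (((n : ℝ) + 1) * 4 * (2 ^ n * (L : ℝ) ^ n)) :=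
            mul_le_mul_of_nonneg_left h6 hcc
        _ = K * (L : ℝ) ^ n := by rw [hKdef]; ring
    have h8 : (L : ℝ) * (L : ℝ) ^ n ≤ K * (L : ℝ) ^ n := by
      calc (L : ℝ) * (L : ℝ) ^ n = (L : ℝ) ^ (n + 1) := by ring
        _ ≤ K * (L : ℝ) ^ n := h7
    exact le_of_mul_le_mul_right h8 hLn
  obtain ⟨L, hLgt⟩ := exists_nat_gt (max 2 K)
  have hL2 : 2 ≤ L := by
    have : (2 : ℝ) ≤ max 2 K := le_max_left _ _
    have : (2 : ℝ) < L := lt_of_le_of_lt this hLgt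
    exact_mod_cast this.le
  have := hfinal L hL2
  have : K < (L : ℝ) := lt_of_le_of_lt (le_max_right 2 K) hLgt
  linarith [hfinal L hL2]
end

section
/- Let d₁, d₂ ≥ 1 be integers, d = d₁ + d₂, and let v : ℤ^{d₂} → ℝ be an arbitrary function. Then for every E ∈ [−d, d] and every ε > 0 there exists a finitely supported Ψ : ℤ^d → ℂ with ∑_{x∈ℤ^d} |Ψ(x)|² = 1, Ψ((0,x₂)) = 0 for all x₂ ∈ ℤ^{d₂}, and ∑_{x∈ℤ^d} | −(1/2)∑_{|y−x|=1} Ψ(y) + δ(x₁) v(x₂) Ψ(x) − E Ψ(x) |² < ε². (This is the Weyl-sequence form of the statement that the spectrum of the surface Schrödinger operator H₀ + V contains [−d, d] for every surface potential v.) -/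
open Complex

namespace WeylAux

noncomputable def boxF (d₁ d₂ : ℕ) (a b : ℤ) : Finset ((Fin d₁ → ℤ) × (Fin d₂ → ℤ)) :=
  (Fintype.piFinset fun _ : Fin d₁ => Finset.Icc a b) ×ˢ
  (Fintype.piFinset fun _ : Fin d₂ => Finset.Icc a b)

lemma mem_boxF {d₁ d₂ : ℕ} {a b : ℤ} {x : (Fin d₁ → ℤ) × (Fin d₂ → ℤ)} :
    x ∈ boxF d₁ d₂ a b ↔ (∀ i, a ≤ x.1 i ∧ x.1 i ≤ b) ∧ (∀ j, a ≤ x.2 j ∧ x.2 j ≤ b) := by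
  simp [boxF, Finset.mem_product, Fintype.mem_piFinset, Finset.mem_Icc]

lemma card_boxF (d₁ d₂ : ℕ) (a b : ℤ) :
    (boxF d₁ d₂ a b).card = (b + 1 - a).toNat ^ (d₁ + d₂) := by
  simp [boxF, Finset.card_product, Fintype.card_piFinset, Int.card_Icc, pow_add]

lemma boxF_subset {d₁ d₂ : ℕ} {a b a' b' : ℤ} (ha : a' ≤ a) (hb : b ≤ b') :
    boxF d₁ d₂ a b ⊆ boxF d₁ d₂ a' b' := by
  intro x hx
  rw [mem_boxF] at *
  exact ⟨fun i => ⟨ha.trans (hx.1 i).1, (hx.1 i).2.trans hb⟩,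
    fun j => ⟨ha.trans (hx.2 j).1, (hx.2 j).2.trans hb⟩⟩

lemma sum_update {n : ℕ} (f : Fin n → ℤ) (i : Fin n) (t : ℤ) :
    ∑ k, Function.update f i t k = (∑ k, f k) + (t - f i) := by
  rw [Finset.sum_update_of_mem (Finset.mem_univ i)]
  rw [← Finset.sum_erase_add Finset.univ f (Finset.mem_univ i)]
  rw [Finset.sdiff_singleton_eq_erase]
  ring

lemma exp_pair (θ : ℝ) (s : ℤ) :
    Complex.exp ((θ : ℂ) * ((s : ℂ) + 1) * Complex.I)
      + Complex.exp ((θ : ℂ) * ((s : ℂ) - 1) * Complex.I)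
      = 2 * (Real.cos θ : ℂ) * Complex.exp ((θ : ℂ) * (s : ℂ) * Complex.I) := by
  have h1 : (θ : ℂ) * ((s : ℂ) + 1) * Complex.I
      = (θ : ℂ) * (s : ℂ) * Complex.I + (θ : ℂ) * Complex.I := by ring
  have h2 : (θ : ℂ) * ((s : ℂ) - 1) * Complex.I
      = (θ : ℂ) * (s : ℂ) * Complex.I + (-θ : ℂ) * Complex.I := by ring
  rw [h1, h2, Complex.exp_add, Complex.exp_add]
  simp only [Complex.exp_mul_I, Complex.cos_neg, Complex.sin_neg, ← Complex.ofReal_cos]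
  ring

lemma norm_exp_int (θ : ℝ) (s : ℤ) :
    ‖Complex.exp ((θ : ℂ) * (s : ℂ) * Complex.I)‖ = 1 := by
  rw [show (θ : ℂ) * (s : ℂ) = ((θ * s : ℝ) : ℂ) by push_cast; ring]
  rw [Complex.norm_exp_ofReal_mul_I]

/-- Cut-off plane wave. -/
noncomputable def wave (d₁ d₂ : ℕ) (θ c : ℝ) (L : ℤ)
    (x : (Fin d₁ → ℤ) × (Fin d₂ → ℤ)) : ℂ :=
  if x ∈ boxF d₁ d₂ 1 L then
    (c : ℂ) * Complex.exp ((θ : ℂ) * (((∑ i, x.1 i) + (∑ j, x.2 j) : ℤ) : ℂ) * Complex.I)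
  else 0

lemma wave_zero_of_bad₁ {d₁ d₂ : ℕ} {θ c : ℝ} {L : ℤ} {x : (Fin d₁ → ℤ) × (Fin d₂ → ℤ)}
    (i₀ : Fin d₁) (h : ¬(1 ≤ x.1 i₀ ∧ x.1 i₀ ≤ L)) : wave d₁ d₂ θ c L x = 0 := by
  rw [wave, if_neg]
  exact fun hmem => h ((mem_boxF.1 hmem).1 i₀)

lemma wave_zero_of_bad₂ {d₁ d₂ : ℕ} {θ c : ℝ} {L : ℤ} {x : (Fin d₁ → ℤ) × (Fin d₂ → ℤ)}
    (j₀ : Fin d₂) (h : ¬(1 ≤ x.2 j₀ ∧ x.2 j₀ ≤ L)) : wave d₁ d₂ θ c L x = 0 := by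
  rw [wave, if_neg]
  exact fun hmem => h ((mem_boxF.1 hmem).2 j₀)

lemma norm_wave_le {d₁ d₂ : ℕ} {θ c : ℝ} (hc : 0 ≤ c) {L : ℤ}
    (x : (Fin d₁ → ℤ) × (Fin d₂ → ℤ)) : ‖wave d₁ d₂ θ c L x‖ ≤ c := by
  rw [wave]
  split
  · rw [norm_mul, norm_exp_int, mul_one, Complex.norm_real, Real.norm_eq_abs,
      _root_.abs_of_nonneg hc]
  · simpa using hc

lemma norm_wave_mem {d₁ d₂ : ℕ} {θ c : ℝ} (hc : 0 ≤ c) {L : ℤ}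
    {x : (Fin d₁ → ℤ) × (Fin d₂ → ℤ)} (hx : x ∈ boxF d₁ d₂ 1 L) :
    ‖wave d₁ d₂ θ c L x‖ = c := by
  rw [wave, if_pos hx, norm_mul, norm_exp_int, mul_one, Complex.norm_real,
    Real.norm_eq_abs, _root_.abs_of_nonneg hc]

lemma lap_wave_interior {d₁ d₂ : ℕ} {θ c : ℝ} {L : ℤ}
    {x : (Fin d₁ → ℤ) × (Fin d₂ → ℤ)} (hx : x ∈ boxF d₁ d₂ 2 (L - 1)) :
    lapSum d₁ d₂ (wave d₁ d₂ θ c L) x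
      = -((d₁ + d₂ : ℕ) : ℂ) * (Real.cos θ : ℂ) * wave d₁ d₂ θ c L x := by
  rw [mem_boxF] at hx
  obtain ⟨hx1, hx2⟩ := hx
  have hxmem : x ∈ boxF d₁ d₂ 1 L := mem_boxF.2
    ⟨fun i => ⟨by linarith [(hx1 i).1], by linarith [(hx1 i).2]⟩,
     fun j => ⟨by linarith [(hx2 j).1], by linarith [(hx2 j).2]⟩⟩
  have key1 : ∀ i : Fin d₁,
      wave d₁ d₂ θ c L (Function.update x.1 i (x.1 i + 1), x.2)
        + wave d₁ d₂ θ c L (Function.update x.1 i (x.1 i - 1), x.2)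
      = 2 * (Real.cos θ : ℂ) * wave d₁ d₂ θ c L x := by
    intro i
    have hmem : ∀ t : ℤ, t = x.1 i + 1 ∨ t = x.1 i - 1 →
        (Function.update x.1 i t, x.2) ∈ boxF d₁ d₂ 1 L := by
      intro t ht
      rw [mem_boxF]
      dsimp only
      refine ⟨fun k => ?_, fun j => ⟨by linarith [(hx2 j).1], by linarith [(hx2 j).2]⟩⟩
      rcases eq_or_ne k i with rfl | hk
      · rw [Function.update_self]
        rcases ht with rfl | rfl
        · exact ⟨by linarith [(hx1 k).1], by linarith [(hx1 k).2]⟩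
        · exact ⟨by linarith [(hx1 k).1], by linarith [(hx1 k).2]⟩
      · rw [Function.update_of_ne hk]
        exact ⟨by linarith [(hx1 k).1], by linarith [(hx1 k).2]⟩
    have hsp : (((∑ k, Function.update x.1 i (x.1 i + 1) k) + ∑ j, x.2 j : ℤ) : ℂ)
        = ((((∑ k, x.1 k) + ∑ j, x.2 j : ℤ) : ℂ) + 1) := by
      rw [sum_update]; push_cast; ring
    have hsm : (((∑ k, Function.update x.1 i (x.1 i - 1) k) + ∑ j, x.2 j : ℤ) : ℂ)
        = ((((∑ k, x.1 k) + ∑ j, x.2 j : ℤ) : ℂ) - 1) := by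
      rw [sum_update]; push_cast; ring
    rw [wave, if_pos (hmem _ (Or.inl rfl)), wave, if_pos (hmem _ (Or.inr rfl)),
      wave, if_pos hxmem]
    simp only [hsp, hsm]
    rw [← mul_add, exp_pair]
    ring
  have key2 : ∀ j : Fin d₂,
      wave d₁ d₂ θ c L (x.1, Function.update x.2 j (x.2 j + 1))
        + wave d₁ d₂ θ c L (x.1, Function.update x.2 j (x.2 j - 1))
      = 2 * (Real.cos θ : ℂ) * wave d₁ d₂ θ c L x := by
    intro j
    have hmem : ∀ t : ℤ, t = x.2 j + 1 ∨ t = x.2 j - 1 →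
        (x.1, Function.update x.2 j t) ∈ boxF d₁ d₂ 1 L := by
      intro t ht
      rw [mem_boxF]
      dsimp only
      refine ⟨fun i => ⟨by linarith [(hx1 i).1], by linarith [(hx1 i).2]⟩, fun k => ?_⟩
      rcases eq_or_ne k j with rfl | hk
      · rw [Function.update_self]
        rcases ht with rfl | rfl
        · exact ⟨by linarith [(hx2 k).1], by linarith [(hx2 k).2]⟩
        · exact ⟨by linarith [(hx2 k).1], by linarith [(hx2 k).2]⟩
      · rw [Function.update_of_ne hk]
        exact ⟨by linarith [(hx2 k).1], by linarith [(hx2 k).2]⟩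
    have hsp : (((∑ i, x.1 i) + ∑ k, Function.update x.2 j (x.2 j + 1) k : ℤ) : ℂ)
        = ((((∑ i, x.1 i) + ∑ k, x.2 k : ℤ) : ℂ) + 1) := by
      rw [sum_update]; push_cast; ring
    have hsm : (((∑ i, x.1 i) + ∑ k, Function.update x.2 j (x.2 j - 1) k : ℤ) : ℂ)
        = ((((∑ i, x.1 i) + ∑ k, x.2 k : ℤ) : ℂ) - 1) := by
      rw [sum_update]; push_cast; ring
    rw [wave, if_pos (hmem _ (Or.inl rfl)), wave, if_pos (hmem _ (Or.inr rfl)),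
      wave, if_pos hxmem]
    simp only [hsp, hsm]
    rw [← mul_add, exp_pair]
    ring
  rw [lapSum, Finset.sum_congr rfl (fun i _ => key1 i),
    Finset.sum_congr rfl (fun j _ => key2 j), Finset.sum_const, Finset.sum_const,
    Finset.card_univ, Fintype.card_fin, Finset.card_univ, Fintype.card_fin,
    nsmul_eq_mul, nsmul_eq_mul]
  push_cast
  ring

lemma lap_wave_outer {d₁ d₂ : ℕ} {θ c : ℝ} {L : ℤ}
    {x : (Fin d₁ → ℤ) × (Fin d₂ → ℤ)} (hx : x ∉ boxF d₁ d₂ 0 (L + 1)) :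
    lapSum d₁ d₂ (wave d₁ d₂ θ c L) x = 0 ∧ wave d₁ d₂ θ c L x = 0 := by
  rw [mem_boxF, not_and_or] at hx
  rcases hx with h | h
  · push_neg at h
    obtain ⟨i₀, hi₀⟩ := h
    have hbad : x.1 i₀ < 0 ∨ L + 1 < x.1 i₀ := by
      rcases le_or_gt 0 (x.1 i₀) with h' | h'
      · exact Or.inr (hi₀ h')
      · exact Or.inl h'
    have hupd : ∀ (i : Fin d₁) (t : ℤ), t = x.1 i + 1 ∨ t = x.1 i - 1 →
        ¬(1 ≤ Function.update x.1 i t i₀ ∧ Function.update x.1 i t i₀ ≤ L) := by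
      intro i t ht
      rcases eq_or_ne i₀ i with rfl | hne
      · rw [Function.update_self]; omega
      · rw [Function.update_of_ne hne]; omega
    refine ⟨?_, wave_zero_of_bad₁ i₀ (by omega)⟩
    rw [lapSum]
    rw [Finset.sum_eq_zero (fun i _ => by
        rw [wave_zero_of_bad₁ (x := (Function.update x.1 i (x.1 i + 1), x.2)) i₀
            (hupd i _ (Or.inl rfl)),
          wave_zero_of_bad₁ (x := (Function.update x.1 i (x.1 i - 1), x.2)) i₀
            (hupd i _ (Or.inr rfl)), add_zero]),
      Finset.sum_eq_zero (fun j _ => by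
        rw [wave_zero_of_bad₁ (x := (x.1, Function.update x.2 j (x.2 j + 1))) i₀ (by dsimp only; omega),
          wave_zero_of_bad₁ (x := (x.1, Function.update x.2 j (x.2 j - 1))) i₀ (by dsimp only; omega),
          add_zero])]
    ring
  · push_neg at h
    obtain ⟨j₀, hj₀⟩ := h
    have hbad : x.2 j₀ < 0 ∨ L + 1 < x.2 j₀ := by
      rcases le_or_gt 0 (x.2 j₀) with h' | h'
      · exact Or.inr (hj₀ h')
      · exact Or.inl h'
    have hupd : ∀ (j : Fin d₂) (t : ℤ), t = x.2 j + 1 ∨ t = x.2 j - 1 →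
        ¬(1 ≤ Function.update x.2 j t j₀ ∧ Function.update x.2 j t j₀ ≤ L) := by
      intro j t ht
      rcases eq_or_ne j₀ j with rfl | hne
      · rw [Function.update_self]; omega
      · rw [Function.update_of_ne hne]; omega
    refine ⟨?_, wave_zero_of_bad₂ j₀ (by omega)⟩
    rw [lapSum]
    rw [Finset.sum_eq_zero (fun i _ => by
        rw [wave_zero_of_bad₂ (x := (Function.update x.1 i (x.1 i + 1), x.2)) j₀ (by dsimp only; omega),
          wave_zero_of_bad₂ (x := (Function.update x.1 i (x.1 i - 1), x.2)) j₀ (by dsimp only; omega),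
          add_zero]),
      Finset.sum_eq_zero (fun j _ => by
        rw [wave_zero_of_bad₂ (x := (x.1, Function.update x.2 j (x.2 j + 1))) j₀
            (hupd j _ (Or.inl rfl)),
          wave_zero_of_bad₂ (x := (x.1, Function.update x.2 j (x.2 j - 1))) j₀
            (hupd j _ (Or.inr rfl)), add_zero])]
    ring

lemma norm_lap_wave_le {d₁ d₂ : ℕ} {θ c : ℝ} (hc : 0 ≤ c) {L : ℤ}
    (x : (Fin d₁ → ℤ) × (Fin d₂ → ℤ)) :
    ‖lapSum d₁ d₂ (wave d₁ d₂ θ c L) x‖ ≤ (d₁ + d₂ : ℝ) * c := by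
  have hb : ∀ y, ‖wave d₁ d₂ θ c L y‖ ≤ c := norm_wave_le hc
  rw [lapSum, norm_mul]
  have h12 : ‖(-(1/2) : ℂ)‖ = 1/2 := by
    rw [norm_neg]; simp
  rw [h12]
  have hA : ‖∑ i : Fin d₁, (wave d₁ d₂ θ c L (Function.update x.1 i (x.1 i + 1), x.2)
      + wave d₁ d₂ θ c L (Function.update x.1 i (x.1 i - 1), x.2))‖ ≤ (d₁ : ℝ) * (2 * c) := by
    refine (norm_sum_le _ _).trans ?_
    have : ∀ i ∈ (Finset.univ : Finset (Fin d₁)),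
        ‖wave d₁ d₂ θ c L (Function.update x.1 i (x.1 i + 1), x.2)
          + wave d₁ d₂ θ c L (Function.update x.1 i (x.1 i - 1), x.2)‖ ≤ 2 * c := by
      intro i _
      refine (norm_add_le _ _).trans ?_
      linarith [hb (Function.update x.1 i (x.1 i + 1), x.2),
        hb (Function.update x.1 i (x.1 i - 1), x.2)]
    refine (Finset.sum_le_sum this).trans ?_
    rw [Finset.sum_const, Finset.card_univ, Fintype.card_fin, nsmul_eq_mul]
  have hB : ‖∑ j : Fin d₂, (wave d₁ d₂ θ c L (x.1, Function.update x.2 j (x.2 j + 1))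
      + wave d₁ d₂ θ c L (x.1, Function.update x.2 j (x.2 j - 1)))‖ ≤ (d₂ : ℝ) * (2 * c) := by
    refine (norm_sum_le _ _).trans ?_
    have : ∀ j ∈ (Finset.univ : Finset (Fin d₂)),
        ‖wave d₁ d₂ θ c L (x.1, Function.update x.2 j (x.2 j + 1))
          + wave d₁ d₂ θ c L (x.1, Function.update x.2 j (x.2 j - 1))‖ ≤ 2 * c := by
      intro j _
      refine (norm_add_le _ _).trans ?_
      linarith [hb (x.1, Function.update x.2 j (x.2 j + 1)),
        hb (x.1, Function.update x.2 j (x.2 j - 1))]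
    refine (Finset.sum_le_sum this).trans ?_
    rw [Finset.sum_const, Finset.card_univ, Fintype.card_fin, nsmul_eq_mul]
  calc 1 / 2 * ‖_ + _‖ ≤ 1 / 2 * (((d₁ : ℝ) * (2 * c)) + ((d₂ : ℝ) * (2 * c))) := by
        have := norm_add_le
          (∑ i : Fin d₁, (wave d₁ d₂ θ c L (Function.update x.1 i (x.1 i + 1), x.2)
            + wave d₁ d₂ θ c L (Function.update x.1 i (x.1 i - 1), x.2)))
          (∑ j : Fin d₂, (wave d₁ d₂ θ c L (x.1, Function.update x.2 j (x.2 j + 1))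
            + wave d₁ d₂ θ c L (x.1, Function.update x.2 j (x.2 j - 1))))
        linarith
    _ = (d₁ + d₂ : ℝ) * c := by ring

end WeylAux

open WeylAux

/-- Weyl-sequence form of `[-d,d] ⊆ σ(H₀ + V)` for an arbitrary surface
potential `v`: for every `E ∈ [-d,d]` and `ε > 0` there is a finitely supported,
normalized `Ψ` vanishing on the surface `{x₁ = 0}` with `‖(H - E)Ψ‖ < ε`. -/
theorem weyl_sequence_for_surface_operator
    (d₁ d₂ : ℕ) (hd₁ : 1 ≤ d₁) (hd₂ : 1 ≤ d₂)
    (v : (Fin d₂ → ℤ) → ℝ)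
    (E : ℝ) (hE : E ∈ Set.Icc (-(d₁ + d₂ : ℝ)) (d₁ + d₂ : ℝ))
    (ε : ℝ) (hε : 0 < ε) :
    ∃ Ψ : (Fin d₁ → ℤ) × (Fin d₂ → ℤ) → ℂ,
      (Function.support Ψ).Finite ∧
      (∑' x : (Fin d₁ → ℤ) × (Fin d₂ → ℤ), ‖Ψ x‖ ^ 2) = 1 ∧
      (∀ x₂ : Fin d₂ → ℤ, Ψ (0, x₂) = 0) ∧
      (∑' x : (Fin d₁ → ℤ) × (Fin d₂ → ℤ),
        ‖lapSum d₁ d₂ Ψ x + (if x.1 = 0 then (v x.2 : ℂ) else 0) * Ψ x - (E : ℂ) * Ψ x‖ ^ 2)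
        < ε ^ 2 := by
  classical
  obtain ⟨hE1, hE2⟩ := hE
  have hDrpos : (0:ℝ) < (d₁ : ℝ) + (d₂ : ℝ) := by
    have : (0:ℝ) < (d₁ : ℝ) := by exact_mod_cast (by omega : 0 < d₁)
    have h2 : (0:ℝ) ≤ (d₂ : ℝ) := by positivity
    linarith
  set θ := Real.arccos (-(E / ((d₁ : ℝ) + (d₂ : ℝ)))) with hθ
  have hcos : Real.cos θ = -(E / ((d₁ : ℝ) + (d₂ : ℝ))) := by
    apply Real.cos_arccos
    · have : E / ((d₁ : ℝ) + (d₂ : ℝ)) ≤ 1 := (div_le_one hDrpos).2 hE2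
      linarith
    · have : -1 ≤ E / ((d₁ : ℝ) + (d₂ : ℝ)) := by
        rw [le_div_iff₀ hDrpos]; linarith
      linarith
  have hEeq : (E : ℂ) = -((d₁ + d₂ : ℕ) : ℂ) * (Real.cos θ : ℂ) := by
    have hr : E = -((d₁ : ℝ) + (d₂ : ℝ)) * Real.cos θ := by
      rw [hcos]; field_simp
    rw [hr]; push_cast; ring
  -- choose L
  have h2L : Filter.Tendsto (fun L : ℕ => 2/(L:ℝ)) Filter.atTop (nhds 0) :=
    tendsto_const_div_atTop_nhds_zero_nat 2
  have ha : Filter.Tendsto (fun L : ℕ => (1 + 2/(L:ℝ))^(d₁+d₂)) Filter.atTop (nhds 1) := by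
    have := (h2L.const_add (1:ℝ)).pow (d₁+d₂)
    simpa using this
  have hbten : Filter.Tendsto (fun L : ℕ => (1 - 2/(L:ℝ))^(d₁+d₂)) Filter.atTop (nhds 1) := by
    have := ((tendsto_const_nhds (x := (1:ℝ)) (f := Filter.atTop (α := ℕ))).sub h2L).pow (d₁+d₂)
    simpa using this
  have hten : Filter.Tendsto
      (fun L : ℕ => 4*((d₁:ℝ)+(d₂:ℝ))^2 * ((1 + 2/(L:ℝ))^(d₁+d₂) - (1 - 2/(L:ℝ))^(d₁+d₂)))
      Filter.atTop (nhds 0) := by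
    have := (ha.sub hbten).const_mul (4*((d₁:ℝ)+(d₂:ℝ))^2)
    simpa using this
  have hev : ∀ᶠ L : ℕ in Filter.atTop,
      4*((d₁:ℝ)+(d₂:ℝ))^2 * ((1 + 2/(L:ℝ))^(d₁+d₂) - (1 - 2/(L:ℝ))^(d₁+d₂)) < ε^2 :=
    hten.eventually_lt_const (by positivity)
  obtain ⟨L, hLε, hL3⟩ := (hev.and (Filter.eventually_ge_atTop 3)).exists
  have hLpos : (0:ℝ) < (L:ℝ) := by exact_mod_cast (by omega : 0 < L)
  have hLD : (0:ℝ) < (L:ℝ)^(d₁+d₂) := by positivity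
  set c : ℝ := Real.sqrt (((L:ℝ)^(d₁+d₂))⁻¹) with hcdef
  have hc0 : 0 ≤ c := Real.sqrt_nonneg _
  have hc2 : c^2 = ((L:ℝ)^(d₁+d₂))⁻¹ := Real.sq_sqrt (by positivity)
  refine ⟨wave d₁ d₂ θ c (L:ℤ), ?_, ?_, ?_, ?_⟩
  · -- finite support
    apply Set.Finite.subset (boxF d₁ d₂ 1 (L:ℤ)).finite_toSet
    intro x hx
    simp only [Function.mem_support] at hx
    by_contra hxb
    exact hx (by rw [wave, if_neg (by simpa using hxb)])
  · -- normalization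
    have hzero : ∀ x ∉ boxF d₁ d₂ 1 (L:ℤ), ‖wave d₁ d₂ θ c (L:ℤ) x‖^2 = 0 := by
      intro x hx
      rw [wave, if_neg hx]
      simp
    rw [tsum_eq_sum hzero]
    rw [Finset.sum_congr rfl (fun x hx => by rw [norm_wave_mem hc0 hx]),
      Finset.sum_const, card_boxF, nsmul_eq_mul, hc2]
    have hcard : ((L:ℤ) + 1 - 1).toNat = L := by omega
    rw [hcard]
    push_cast
    exact mul_inv_cancel₀ (ne_of_gt hLD)
  · -- surface condition
    intro x₂
    refine wave_zero_of_bad₁ ⟨0, by omega⟩ ?_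
    simp
  · -- Weyl estimate
    have hiff : ∀ x : (Fin d₁ → ℤ) × (Fin d₂ → ℤ),
        ‖lapSum d₁ d₂ (wave d₁ d₂ θ c (L:ℤ)) x + (if x.1 = 0 then (v x.2 : ℂ) else 0) * wave d₁ d₂ θ c (L:ℤ) x
          - (E : ℂ) * wave d₁ d₂ θ c (L:ℤ) x‖ ^ 2
        = ‖lapSum d₁ d₂ (wave d₁ d₂ θ c (L:ℤ)) x - (E : ℂ) * wave d₁ d₂ θ c (L:ℤ) x‖ ^ 2 := by
      intro x
      have hz : (if x.1 = 0 then (v x.2 : ℂ) else 0) * wave d₁ d₂ θ c (L:ℤ) x = 0 := by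
        by_cases h : x.1 = 0
        · have hw : wave d₁ d₂ θ c (L:ℤ) x = 0 := by
            refine wave_zero_of_bad₁ ⟨0, by omega⟩ ?_
            rw [h]
            simp
          rw [hw, mul_zero]
        · rw [if_neg h, zero_mul]
      rw [hz, add_zero]
    rw [tsum_congr hiff]
    have hvan : ∀ x ∉ (boxF d₁ d₂ 0 ((L:ℤ)+1)) \ (boxF d₁ d₂ 2 ((L:ℤ)-1)),
        ‖lapSum d₁ d₂ (wave d₁ d₂ θ c (L:ℤ)) x - (E : ℂ) * wave d₁ d₂ θ c (L:ℤ) x‖ ^ 2 = 0 := by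
      intro x hx
      rw [Finset.mem_sdiff] at hx
      push_neg at hx
      by_cases hB : x ∈ boxF d₁ d₂ 0 ((L:ℤ)+1)
      · have hI := hx hB
        have hz : -((d₁ + d₂ : ℕ) : ℂ) * (Real.cos θ : ℂ) * wave d₁ d₂ θ c (L:ℤ) x
            - (E : ℂ) * wave d₁ d₂ θ c (L:ℤ) x = 0 := by
          rw [hEeq]; ring
        rw [lap_wave_interior hI, hz]
        simp
      · obtain ⟨h1, h2⟩ := lap_wave_outer hB
        rw [h1, h2]
        simp
    rw [tsum_eq_sum hvan]
    have hbd : ∀ x ∈ (boxF d₁ d₂ 0 ((L:ℤ)+1)) \ (boxF d₁ d₂ 2 ((L:ℤ)-1)),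
        ‖lapSum d₁ d₂ (wave d₁ d₂ θ c (L:ℤ)) x - (E : ℂ) * wave d₁ d₂ θ c (L:ℤ) x‖ ^ 2
          ≤ (2*((d₁:ℝ)+(d₂:ℝ))*c)^2 := by
      intro x _
      have h1 : ‖lapSum d₁ d₂ (wave d₁ d₂ θ c (L:ℤ)) x - (E : ℂ) * wave d₁ d₂ θ c (L:ℤ) x‖ ≤ 2*((d₁:ℝ)+(d₂:ℝ))*c := by
        refine (norm_sub_le _ _).trans ?_
        have h2 := norm_lap_wave_le (θ := θ) hc0 (L := (L:ℤ)) x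
        have h3 : ‖(E:ℂ) * wave d₁ d₂ θ c (L:ℤ) x‖ ≤ ((d₁:ℝ)+(d₂:ℝ)) * c := by
          rw [norm_mul, Complex.norm_real, Real.norm_eq_abs]
          have hEabs : |E| ≤ (d₁:ℝ)+(d₂:ℝ) := abs_le.2 ⟨by linarith, by linarith⟩
          exact mul_le_mul hEabs (norm_wave_le hc0 x) (norm_nonneg _) (by linarith)
        push_cast at h2
        linarith
      exact pow_le_pow_left₀ (norm_nonneg _) h1 2
    have hineq := Finset.sum_le_card_nsmul _ _ _ hbd
    rw [nsmul_eq_mul] at hineq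
    refine lt_of_le_of_lt hineq ?_
    have hsub : boxF d₁ d₂ 2 ((L:ℤ)-1) ⊆ boxF d₁ d₂ 0 ((L:ℤ)+1) :=
      boxF_subset (by omega) (by omega)
    have hcardS : ((boxF d₁ d₂ 0 ((L:ℤ)+1)) \ (boxF d₁ d₂ 2 ((L:ℤ)-1))).card
        = (L+2)^(d₁+d₂) - (L-2)^(d₁+d₂) := by
      rw [Finset.card_sdiff_of_subset hsub, card_boxF, card_boxF]
      have e1 : ((L:ℤ) + 1 + 1 - 0).toNat = L + 2 := by omega
      have e2 : ((L:ℤ) - 1 + 1 - 2).toNat = L - 2 := by omega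
      rw [e1, e2]
    have hcastS : ((((boxF d₁ d₂ 0 ((L:ℤ)+1)) \ (boxF d₁ d₂ 2 ((L:ℤ)-1))).card : ℝ))
        = ((L:ℝ)+2)^(d₁+d₂) - ((L:ℝ)-2)^(d₁+d₂) := by
      rw [hcardS, Nat.cast_sub (Nat.pow_le_pow_left (by omega) _), Nat.cast_pow, Nat.cast_pow,
        Nat.cast_sub (show 2 ≤ L by omega)]
      push_cast
      ring_nf
    rw [hcastS]
    have hfin : (((L:ℝ)+2)^(d₁+d₂) - ((L:ℝ)-2)^(d₁+d₂)) * (2*((d₁:ℝ)+(d₂:ℝ))*c)^2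
        = 4*((d₁:ℝ)+(d₂:ℝ))^2 * ((1 + 2/(L:ℝ))^(d₁+d₂) - (1 - 2/(L:ℝ))^(d₁+d₂)) := by
      have e1 : (1 + 2/(L:ℝ)) = ((L:ℝ)+2)/(L:ℝ) := by field_simp
      have e2 : (1 - 2/(L:ℝ)) = ((L:ℝ)-2)/(L:ℝ) := by field_simp
      have e3 : (2*((d₁:ℝ)+(d₂:ℝ))*c)^2 = 4*((d₁:ℝ)+(d₂:ℝ))^2 * c^2 := by ring
      rw [e1, e2, div_pow, div_pow, e3, hc2]
      field_simp
    rw [hfin]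
    exact hLε
end

section
/- Let 𝓢 be a complex Hilbert space, g > 0, and let γ₀ be a bounded operator on 𝓢 such that gγ₀ + i is invertible; set b = (gγ₀ − i)(gγ₀ + i)^{−1} and assume ‖b‖ < 1. Let u be a unitary operator on 𝓢 and σ ∈ ℂ with |σ| ≤ 1, and assume 1 + σu is invertible; define v = (g/i)(1 − σu)(1 + σu)^{−1}. Then: (a) 1 − σbu is invertible; (b) 1 + γ₀v is invertible; and (c) v(1 + γ₀v)^{−1} = g (1 − σu)(1 − σbu)^{−1}(gγ₀ + i)^{−1}. -/
open Complex

private lemma cayley_aux {R : Type*} [Ring R] [Algebra ℂ R]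
    (g : ℂ) (γ₀ b u v : R) (σ : ℂ)
    (hγ : IsUnit (g • γ₀ + Complex.I • (1 : R)))
    (hb : b = (g • γ₀ - Complex.I • (1 : R)) *
      Ring.inverse (g • γ₀ + Complex.I • (1 : R)))
    (hWu : IsUnit ((1 : R) - σ • (b * u)))
    (h1 : IsUnit ((1 : R) + σ • u))
    (hv : v = (g / Complex.I) •
      (((1 : R) - σ • u) * Ring.inverse ((1 : R) + σ • u))) :
    IsUnit ((1 : R) + γ₀ * v) ∧
    v * Ring.inverse ((1 : R) + γ₀ * v)
      = g • (((1 : R) - σ • u) * Ring.inverse ((1 : R) - σ • (b * u)) *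
          Ring.inverse (g • γ₀ + Complex.I • (1 : R))) := by
  set A : R := g • γ₀ + Complex.I • (1 : R) with hA
  set B : R := g • γ₀ - Complex.I • (1 : R) with hB
  set C : R := (1 : R) + σ • u with hC
  set D : R := (1 : R) - σ • u with hD
  set W : R := (1 : R) - σ • (b * u) with hW
  have hIg : Complex.I * (g / Complex.I) = g := by
    rw [mul_comm, div_mul_cancel₀ _ Complex.I_ne_zero]
  -- basic inverse facts
  have hAa : A * Ring.inverse A = 1 := Ring.mul_inverse_cancel _ hγ
  have haA : Ring.inverse A * A = 1 := Ring.inverse_mul_cancel _ hγ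
  have hCc : C * Ring.inverse C = 1 := Ring.mul_inverse_cancel _ h1
  have hcC : Ring.inverse C * C = 1 := Ring.inverse_mul_cancel _ h1
  have hWw : W * Ring.inverse W = 1 := Ring.mul_inverse_cancel _ hWu
  have hwW : Ring.inverse W * W = 1 := Ring.inverse_mul_cancel _ hWu
  have hAa' : ∀ x : R, A * (Ring.inverse A * x) = x := fun x => by
    rw [← mul_assoc, hAa, one_mul]
  have haA' : ∀ x : R, Ring.inverse A * (A * x) = x := fun x => by
    rw [← mul_assoc, haA, one_mul]
  have hCc' : ∀ x : R, C * (Ring.inverse C * x) = x := fun x => by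
    rw [← mul_assoc, hCc, one_mul]
  have hcC' : ∀ x : R, Ring.inverse C * (C * x) = x := fun x => by
    rw [← mul_assoc, hcC, one_mul]
  have hWw' : ∀ x : R, W * (Ring.inverse W * x) = x := fun x => by
    rw [← mul_assoc, hWw, one_mul]
  have hwW' : ∀ x : R, Ring.inverse W * (W * x) = x := fun x => by
    rw [← mul_assoc, hwW, one_mul]
  -- b commutes with A
  have hABc : A * B = B * A := by
    rw [hA, hB]
    simp only [add_mul, mul_add, sub_mul, mul_sub, smul_mul_assoc, mul_smul_comm,
      smul_smul, mul_one, one_mul]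
    module
  have hbA : b * A = B := by
    rw [hb, mul_assoc, haA, mul_one]
  have hAb : A * b = B := by
    rw [hb, ← mul_assoc, hABc, mul_assoc, hAa, mul_one]
  -- structural identities
  have h2I : ((1 : R) - b) * A = ((2 : ℂ) * Complex.I) • (1 : R) := by
    rw [sub_mul, one_mul, hbA, hA, hB]; module
  have h2g : ((1 : R) + b) * A = ((2 : ℂ) * g) • γ₀ := by
    rw [add_mul, one_mul, hbA, hA, hB]; module
  have hexp : ((1 : R) - b) * C + ((1 : R) + b) * D = (2 : ℂ) • W := by
    rw [hC, hD, hW]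
    simp only [mul_add, mul_sub, sub_mul, add_mul, one_mul, mul_one, mul_smul_comm]
    module
  have hvC : v * C = (g / Complex.I) • D := by
    rw [hv, smul_mul_assoc, mul_assoc, hcC, mul_one]
  -- key identity
  have hKey : Complex.I • (((1 : R) + γ₀ * v) * C) = A * W := by
    have step1 : Complex.I • (((1 : R) + γ₀ * v) * C)
        = Complex.I • C + g • (γ₀ * D) := by
      rw [add_mul, one_mul, mul_assoc, hvC, mul_smul_comm, smul_add, smul_smul, hIg]
    rw [step1]
    have e1 : Complex.I • C = ((2:ℂ)⁻¹) • (((1 : R) - b) * A * C) := by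
      rw [h2I, smul_mul_assoc, one_mul, smul_smul]
      congr 1
      ring
    have e2 : g • (γ₀ * D) = ((2:ℂ)⁻¹) • (((1 : R) + b) * A * D) := by
      rw [h2g, smul_mul_assoc, smul_smul]
      congr 1
      ring
    have c1 : ((1 : R) - b) * A = A * ((1 : R) - b) := by
      rw [sub_mul, one_mul, hbA, mul_sub, mul_one, hAb]
    have c2 : ((1 : R) + b) * A = A * ((1 : R) + b) := by
      rw [add_mul, one_mul, hbA, mul_add, mul_one, hAb]
    have e3 : ((1 : R) - b) * A * C + ((1 : R) + b) * A * D
        = A * (((1 : R) - b) * C + ((1 : R) + b) * D) := by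
      rw [c1, c2, mul_assoc, mul_assoc, ← mul_add]
    rw [e1, e2, ← smul_add, e3, hexp, mul_smul_comm, smul_smul]
    norm_num
  -- P = 1 + γ₀ v and its explicit inverse Q
  set Q : R := Complex.I • (C * Ring.inverse W * Ring.inverse A) with hQ
  have hPC : ((1 : R) + γ₀ * v) * C = Complex.I⁻¹ • (A * W) := by
    have h := congrArg (fun x : R => (Complex.I⁻¹ : ℂ) • x) hKey
    simpa [smul_smul, inv_mul_cancel₀ Complex.I_ne_zero] using h
  have hP : ((1 : R) + γ₀ * v) = Complex.I⁻¹ • (A * W * Ring.inverse C) := by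
    have h := congrArg (fun x : R => x * Ring.inverse C) hPC
    simpa [mul_assoc, hCc', hCc, smul_mul_assoc] using h
  have hPQ : ((1 : R) + γ₀ * v) * Q = 1 := by
    rw [hP, hQ, smul_mul_smul_comm, inv_mul_cancel₀ Complex.I_ne_zero, one_smul]
    simp [mul_assoc, hAa', haA', hCc', hcC', hWw', hwW', hAa, haA, hCc, hcC, hWw, hwW]
  have hQP : Q * ((1 : R) + γ₀ * v) = 1 := by
    rw [hP, hQ, smul_mul_smul_comm, mul_inv_cancel₀ Complex.I_ne_zero, one_smul]
    simp [mul_assoc, hAa', haA', hCc', hcC', hWw', hwW', hAa, haA, hCc, hcC, hWw, hwW]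
  have hPu : IsUnit ((1 : R) + γ₀ * v) := ⟨⟨_, Q, hPQ, hQP⟩, rfl⟩
  have hinv : Ring.inverse ((1 : R) + γ₀ * v) = Q :=
    Ring.inverse_unit ⟨_, Q, hPQ, hQP⟩
  refine ⟨hPu, ?_⟩
  rw [hinv, hQ, mul_smul_comm, ← mul_assoc, ← mul_assoc, hvC, smul_mul_assoc,
    smul_mul_assoc, smul_smul, hIg]


/-- Abstract Cayley-transform lemma. With `b = (gγ₀ - i)(gγ₀ + i)⁻¹`,
`‖b‖ < 1`, `u` unitary, `|σ| ≤ 1`, `1 + σu` invertible and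
`v = (g/i)(1 - σu)(1 + σu)⁻¹`, one has: (a) `1 - σbu` is invertible,
(b) `1 + γ₀ v` is invertible, and (c) `v(1 + γ₀v)⁻¹ = g(1 - σu)(1 - σbu)⁻¹(gγ₀ + i)⁻¹`. -/
theorem cayley_transform_t_operator_formula
    {S : Type*} [NormedAddCommGroup S] [InnerProductSpace ℂ S] [CompleteSpace S]
    (g : ℝ) (hg : 0 < g)
    (γ₀ : S →L[ℂ] S)
    (hγ : IsUnit ((g : ℂ) • γ₀ + Complex.I • (1 : S →L[ℂ] S)))
    (b : S →L[ℂ] S)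
    (hb : b = ((g : ℂ) • γ₀ - Complex.I • (1 : S →L[ℂ] S)) *
      Ring.inverse ((g : ℂ) • γ₀ + Complex.I • (1 : S →L[ℂ] S)))
    (hbn : ‖b‖ < 1)
    (u : S →L[ℂ] S) (hu : u ∈ unitary (S →L[ℂ] S))
    (σ : ℂ) (hσ : ‖σ‖ ≤ 1)
    (h1 : IsUnit ((1 : S →L[ℂ] S) + σ • u))
    (v : S →L[ℂ] S)
    (hv : v = ((g : ℂ) / Complex.I) •
      (((1 : S →L[ℂ] S) - σ • u) * Ring.inverse ((1 : S →L[ℂ] S) + σ • u))) :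
    IsUnit ((1 : S →L[ℂ] S) - σ • (b * u)) ∧
    IsUnit ((1 : S →L[ℂ] S) + γ₀ * v) ∧
    v * Ring.inverse ((1 : S →L[ℂ] S) + γ₀ * v)
      = (g : ℂ) • (((1 : S →L[ℂ] S) - σ • u) *
          Ring.inverse ((1 : S →L[ℂ] S) - σ • (b * u)) *
          Ring.inverse ((g : ℂ) • γ₀ + Complex.I • (1 : S →L[ℂ] S))) := by
  have hu1 : ‖u‖ ≤ 1 := by
    have h := CStarRing.norm_star_mul_self (x := u)
    rw [(Unitary.mem_iff.mp hu).1] at h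
    have h1n : ‖(1 : S →L[ℂ] S)‖ ≤ 1 := ContinuousLinearMap.norm_id_le
    nlinarith [norm_nonneg u]
  have hσ' : ‖σ‖ ≤ 1 := by exact hσ
  have hWn : ‖σ • (b * u)‖ < 1 := by
    rw [norm_smul]
    have h2 : ‖b * u‖ ≤ ‖b‖ * ‖u‖ := norm_mul_le _ _
    nlinarith [norm_nonneg (b * u), norm_nonneg b, norm_nonneg σ, norm_nonneg u]
  have hWu : IsUnit ((1 : S →L[ℂ] S) - σ • (b * u)) := (Units.oneSub _ hWn).isUnit
  obtain ⟨h2, h3⟩ := cayley_aux (g : ℂ) γ₀ b u v σ hγ hb hWu h1 hv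
  exact ⟨hWu, h2, h3⟩
end
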